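/- Entropy dissipation identity (static form of the Claim in the proof of Corollary 2.3): let f : ℝ^d → ℝ be smooth with compact support, set p := π·e^f, b := ∇ log π − γ, and σ := −∇·(p b) + Δp. Then ∫_{ℝ^d} f(x)·σ(x) dx = −∫_{ℝ^d} ‖∇f(x)‖² p(x) dx; that is, the dissipation of the relative entropy along the non-reversible Fokker–Planck equation equals minus the relative Fisher information. -/

import Mathlib

open MeasureTheory
open scoped BigOperators

noncomputable section

/-- `i`-th partial derivative of `f` at `x`, in the coordinate direction `i`. -/
def pderiv' {d : ℕ} (f : EuclideanSpace ℝ (Fin d) → ℝ) (i : Fin d)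
    (x : EuclideanSpace ℝ (Fin d)) : ℝ :=
  fderiv ℝ f x (EuclideanSpace.single i 1)

/-- second partial derivative `∂_i ∂_j f` at `x`. -/
def pderiv2 {d : ℕ} (f : EuclideanSpace ℝ (Fin d) → ℝ) (i j : Fin d)
    (x : EuclideanSpace ℝ (Fin d)) : ℝ :=
  pderiv' (fun y => pderiv' f j y) i x

/-- Laplacian `Δf`. -/
def lap {d : ℕ} (f : EuclideanSpace ℝ (Fin d) → ℝ) (x : EuclideanSpace ℝ (Fin d)) : ℝ :=
  ∑ i, pderiv2 f i i x

/-- carré du champ `Γ₁(g,h) = ⟨∇g, ∇h⟩`. -/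
def Gamma1 {d : ℕ} (g h : EuclideanSpace ℝ (Fin d) → ℝ) (x : EuclideanSpace ℝ (Fin d)) : ℝ :=
  ∑ i, pderiv' g i x * pderiv' h i x

/-- generator `L̃ h = ⟨∇ log π, ∇h⟩ + Δh`. -/
def genL {d : ℕ} (π h : EuclideanSpace ℝ (Fin d) → ℝ) (x : EuclideanSpace ℝ (Fin d)) : ℝ :=
  Gamma1 (fun y => Real.log (π y)) h x + lap h x

/-- Gamma two operator `Γ₂(f,f) = ½ L̃ Γ₁(f,f) − Γ₁(L̃f, f)`. -/
def Gamma2 {d : ℕ} (π f : EuclideanSpace ℝ (Fin d) → ℝ) (x : EuclideanSpace ℝ (Fin d)) : ℝ :=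
  (1/2 : ℝ) * genL π (fun y => Gamma1 f f y) x - Gamma1 (fun y => genL π f y) f x

/-- information Gamma operator `Γ_I(f,f) = −½⟨γ, ∇Γ₁(f,f)⟩ + (L̃f)·⟨∇f, γ⟩`. -/
def GammaI {d : ℕ} (π : EuclideanSpace ℝ (Fin d) → ℝ)
    (γ : EuclideanSpace ℝ (Fin d) → EuclideanSpace ℝ (Fin d))
    (f : EuclideanSpace ℝ (Fin d) → ℝ) (x : EuclideanSpace ℝ (Fin d)) : ℝ :=
  -(1/2 : ℝ) * (∑ i, γ x i * pderiv' (fun y => Gamma1 f f y) i x)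
    + genL π f x * (∑ i, pderiv' f i x * γ x i)

/-- the tensor `ℜ` of the paper:
`ℜ_{ij} = −∂²_{ij} log π + ((3−2d)/8) γ_i γ_j − (1/8) δ_{ij} Σ_k γ_k²
          + ½(γ_i ∂_j log π + γ_j ∂_i log π)`. -/
def Rtensor {d : ℕ} (π : EuclideanSpace ℝ (Fin d) → ℝ)
    (γ : EuclideanSpace ℝ (Fin d) → EuclideanSpace ℝ (Fin d))
    (i j : Fin d) (x : EuclideanSpace ℝ (Fin d)) : ℝ :=
  -pderiv2 (fun y => Real.log (π y)) i j x
    + ((3 - 2 * (d : ℝ)) / 8) * γ x i * γ x j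
    - (1/8 : ℝ) * (if i = j then ∑ k, (γ x k) ^ 2 else 0)
    + (1/2 : ℝ) * (γ x i * pderiv' (fun y => Real.log (π y)) j x
        + γ x j * pderiv' (fun y => Real.log (π y)) i x)

/-- the modified Hessian matrix `𝔥ess f`. -/
def hessM {d : ℕ} (γ : EuclideanSpace ℝ (Fin d) → EuclideanSpace ℝ (Fin d))
    (f : EuclideanSpace ℝ (Fin d) → ℝ) (i j : Fin d) (x : EuclideanSpace ℝ (Fin d)) : ℝ :=
  if i = j then
    pderiv2 f i i x + (1/2 : ℝ) * (∑ k, γ x k * pderiv' f k x)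
      - (1/2 : ℝ) * γ x i * pderiv' f i x
  else
    pderiv2 f i j x - (1/4 : ℝ) * (γ x i * pderiv' f j x + γ x j * pderiv' f i x)

/-- right-hand side of the Fokker–Planck equation `−∇·(p b) + Δp` with drift
`b = ∇ log π − γ`, evaluated at a density `p`. -/
def FPrhs {d : ℕ} (π : EuclideanSpace ℝ (Fin d) → ℝ)
    (γ : EuclideanSpace ℝ (Fin d) → EuclideanSpace ℝ (Fin d))
    (p : EuclideanSpace ℝ (Fin d) → ℝ) (x : EuclideanSpace ℝ (Fin d)) : ℝ :=
  -(∑ i, pderiv' (fun y => p y * (pderiv' (fun z => Real.log (π z)) i y - γ y i)) i x)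
    + lap p x

/-- `L̃* p = −∇·(p ∇ log π) + Δp`. -/
def Ltilstar {d : ℕ} (π p : EuclideanSpace ℝ (Fin d) → ℝ)
    (x : EuclideanSpace ℝ (Fin d)) : ℝ :=
  -(∑ i, pderiv' (fun y => p y * pderiv' (fun z => Real.log (π z)) i y) i x) + lap p x

/-- Arnold–Carlen tensor `(ℜ_AC)_{ij} = −∂²_{ij} log π − ½(∂_i γ_j + ∂_j γ_i)`. -/
def RAC {d : ℕ} (π : EuclideanSpace ℝ (Fin d) → ℝ)
    (γ : EuclideanSpace ℝ (Fin d) → EuclideanSpace ℝ (Fin d))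
    (i j : Fin d) (x : EuclideanSpace ℝ (Fin d)) : ℝ :=
  -pderiv2 (fun y => Real.log (π y)) i j x
    - (1/2 : ℝ) * (pderiv' (fun y => γ y j) i x + pderiv' (fun y => γ y i) j x)



section helpers
variable {d : ℕ}

local notation "EE" => EuclideanSpace ℝ (Fin d)

lemma contDiff_pderiv' {g : EE → ℝ} (hg : ContDiff ℝ (⊤ : ℕ∞) g) (i : Fin d) :
    ContDiff ℝ (⊤ : ℕ∞) (fun y => pderiv' g i y) :=
  (hg.fderiv_right (m := (⊤ : ℕ∞)) (by exact_mod_cast le_top)).clm_apply contDiff_const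

lemma pderiv'_add {a b : EE → ℝ} {i : Fin d} {x : EE} (ha : DifferentiableAt ℝ a x)
    (hb : DifferentiableAt ℝ b x) :
    pderiv' (fun y => a y + b y) i x = pderiv' a i x + pderiv' b i x := by
  unfold pderiv'; rw [fderiv_fun_add ha hb]; rfl

lemma pderiv'_sub {a b : EE → ℝ} {i : Fin d} {x : EE} (ha : DifferentiableAt ℝ a x)
    (hb : DifferentiableAt ℝ b x) :
    pderiv' (fun y => a y - b y) i x = pderiv' a i x - pderiv' b i x := by
  unfold pderiv'; rw [fderiv_fun_sub ha hb]; rfl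

lemma pderiv'_mul {a b : EE → ℝ} {i : Fin d} {x : EE} (ha : DifferentiableAt ℝ a x)
    (hb : DifferentiableAt ℝ b x) :
    pderiv' (fun y => a y * b y) i x = pderiv' a i x * b x + a x * pderiv' b i x := by
  unfold pderiv'; rw [fderiv_fun_mul ha hb]; simp; ring

lemma pderiv'_const {c : ℝ} {i : Fin d} {x : EE} : pderiv' (fun _ : EE => c) i x = 0 := by
  unfold pderiv'; simp

lemma pderiv'_add_const {a : EE → ℝ} {c : ℝ} {i : Fin d} {x : EE} :
    pderiv' (fun y => a y + c) i x = pderiv' a i x := by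
  unfold pderiv'; rw [fderiv_add_const]

lemma pderiv'_sub_const {a : EE → ℝ} {c : ℝ} {i : Fin d} {x : EE} :
    pderiv' (fun y => a y - c) i x = pderiv' a i x := by
  unfold pderiv'; rw [fderiv_sub_const]

lemma pderiv'_exp {a : EE → ℝ} {i : Fin d} {x : EE} (ha : DifferentiableAt ℝ a x) :
    pderiv' (fun y => Real.exp (a y)) i x = Real.exp (a x) * pderiv' a i x := by
  unfold pderiv'; rw [fderiv_exp ha]; simp

lemma pderiv'_log {a : EE → ℝ} {i : Fin d} {x : EE} (ha : DifferentiableAt ℝ a x)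
    (hx : a x ≠ 0) :
    pderiv' (fun y => Real.log (a y)) i x = pderiv' a i x / a x := by
  unfold pderiv'
  have h := ((Real.hasDerivAt_log hx).comp_hasFDerivAt x ha.hasFDerivAt).fderiv
  rw [show (fun y => Real.log (a y)) = Real.log ∘ a from rfl, h]
  simp [div_eq_inv_mul]

lemma pderiv'_zero_of_nmem {g : EE → ℝ} {i : Fin d} {x : EE}
    (hx : x ∉ tsupport g) : pderiv' g i x = 0 := by
  have h : g =ᶠ[nhds x] (fun _ => (0:ℝ)) := by
    filter_upwards [(isClosed_tsupport g).isOpen_compl.mem_nhds hx] with y hy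
    exact image_eq_zero_of_notMem_tsupport hy
  unfold pderiv'
  rw [h.fderiv_eq]
  simp

lemma hasCompactSupport_pderiv' {g : EE → ℝ} (hgc : HasCompactSupport g) (i : Fin d) :
    HasCompactSupport (fun x => pderiv' g i x) :=
  (hgc.fderiv ℝ).comp_left (g := fun L : EE →L[ℝ] ℝ => L (EuclideanSpace.single i 1)) rfl

lemma integral_pderiv'_eq_zero {g : EE → ℝ} (hg : ContDiff ℝ (⊤ : ℕ∞) g)
    (hgc : HasCompactSupport g) (i : Fin d) : ∫ x, pderiv' g i x = 0 := by
  have h := integral_mul_fderiv_eq_neg_fderiv_mul_of_integrable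
    (μ := (volume : Measure EE)) (f := fun _ : EE => (1:ℝ)) (g := g)
    (v := EuclideanSpace.single i 1) ?_ ?_ ?_ (fun _ _ => differentiableAt_const _)
    (fun _ _ => (hg.differentiable (by simp)).differentiableAt)
  · simpa [pderiv'] using h
  · simp
  · simp only [one_mul]; exact ((contDiff_pderiv' hg i).continuous).integrable_of_hasCompactSupport
      (hasCompactSupport_pderiv' hgc i)
  · simpa using hg.continuous.integrable_of_hasCompactSupport hgc

end helpers

/-- Entropy dissipation identity (Claim in the proof of Corollary 2.3, static form):
with `p = π e^f`, `b = ∇ log π − γ` and `σ = −∇·(p b) + Δp`,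
`∫ f σ = −∫ ‖∇f‖² p`. -/
theorem entropy_dissipation_identity
    (d : ℕ) (hd : 1 ≤ d)
    (π : EuclideanSpace ℝ (Fin d) → ℝ) (hπ : ContDiff ℝ (⊤ : ℕ∞) π)
    (hπpos : ∀ x, 0 < π x)
    (γ : EuclideanSpace ℝ (Fin d) → EuclideanSpace ℝ (Fin d))
    (hγ : ContDiff ℝ (⊤ : ℕ∞) γ)
    (hstat : ∀ x, ∑ i, pderiv' (fun y => π y * γ y i) i x = 0)
    (f : EuclideanSpace ℝ (Fin d) → ℝ) (hf : ContDiff ℝ (⊤ : ℕ∞) f)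
    (hfc : HasCompactSupport f) :
    ∫ x, f x * FPrhs π γ (fun z => π z * Real.exp (f z)) x =
      -∫ x, Gamma1 f f x * (π x * Real.exp (f x)) := by
  classical
  have hD : ∀ (g : EuclideanSpace ℝ (Fin d) → ℝ), ContDiff ℝ (⊤ : ℕ∞) g →
      ∀ x, DifferentiableAt ℝ g x := fun g hg x =>
    (hg.differentiable (by simp)).differentiableAt
  have hπne : ∀ x, π x ≠ 0 := fun x => (hπpos x).ne'
  set p : EuclideanSpace ℝ (Fin d) → ℝ := fun z => π z * Real.exp (f z) with hpdef
  have hps : ContDiff ℝ (⊤ : ℕ∞) p := hπ.mul (Real.contDiff_exp.comp hf)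
  have hexp : ContDiff ℝ (⊤ : ℕ∞) (fun z => Real.exp (f z)) := Real.contDiff_exp.comp hf
  have hγi : ∀ i : Fin d, ContDiff ℝ (⊤ : ℕ∞) (fun y => γ y i) := fun i => by
    exact
      ((EuclideanSpace.proj i : EuclideanSpace ℝ (Fin d) →L[ℝ] ℝ).contDiff.comp hγ)
  have hlps : ContDiff ℝ (⊤ : ℕ∞) (fun y => Real.log (π y)) := hπ.log hπne
  -- d p
  have hDp : ∀ (i : Fin d) x, pderiv' p i x
      = Real.exp (f x) * pderiv' π i x + p x * pderiv' f i x := by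
    intro i x
    rw [hpdef, pderiv'_mul (hD π hπ x) (hD _ hexp x), pderiv'_exp (hD f hf x)]
    ring
  -- the drift functions in FPrhs rewritten
  have hBfun : ∀ i : Fin d,
      (fun y => pderiv' p i y - p y * (pderiv' (fun z => Real.log (π z)) i y - γ y i))
        = fun y => p y * pderiv' f i y + p y * γ y i := by
    intro i; funext y
    rw [hDp i y, pderiv'_log (hD π hπ y) (hπne y)]
    have hpy : p y = π y * Real.exp (f y) := rfl
    rw [hpy, div_eq_mul_inv]
    have h4 : π y * Real.exp (f y) * (pderiv' π i y * (π y)⁻¹ - γ y i)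
        = Real.exp (f y) * (π y * (π y)⁻¹) * pderiv' π i y - π y * Real.exp (f y) * γ y i := by
      ring
    rw [h4, mul_inv_cancel₀ (hπne y)]
    ring
  -- smoothness of pieces
  have hAi : ∀ i : Fin d, ContDiff ℝ (⊤ : ℕ∞)
      (fun y => p y * (pderiv' (fun z => Real.log (π z)) i y - γ y i)) := fun i =>
    hps.mul ((contDiff_pderiv' hlps i).sub (hγi i))
  have hBi : ∀ i : Fin d, ContDiff ℝ (⊤ : ℕ∞)
      (fun y => p y * pderiv' f i y + p y * γ y i) := fun i =>
    (hps.mul (contDiff_pderiv' hf i)).add (hps.mul (hγi i))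
  have hpDfi : ∀ i : Fin d, ContDiff ℝ (⊤ : ℕ∞) (fun y => p y * pderiv' f i y) := fun i =>
    hps.mul (contDiff_pderiv' hf i)
  have hpγi : ∀ i : Fin d, ContDiff ℝ (⊤ : ℕ∞) (fun y => p y * γ y i) := fun i =>
    hps.mul (hγi i)
  have hπγi : ∀ i : Fin d, ContDiff ℝ (⊤ : ℕ∞) (fun y => π y * γ y i) := fun i =>
    hπ.mul (hγi i)
  -- FPrhs rewritten as a divergence
  have hFP : ∀ x, FPrhs π γ p x
      = ∑ i, pderiv' (fun y => p y * pderiv' f i y + p y * γ y i) i x := by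
    intro x
    have : FPrhs π γ p x = ∑ i, (pderiv' (fun y => pderiv' p i y) i x
        - pderiv' (fun y => p y * (pderiv' (fun z => Real.log (π z)) i y - γ y i)) i x) := by
      simp only [FPrhs, lap, pderiv2, Finset.sum_sub_distrib]
      ring
    rw [this]
    refine Finset.sum_congr rfl fun i _ => ?_
    rw [← pderiv'_sub (hD _ (contDiff_pderiv' hps i) x) (hD _ (hAi i) x), hBfun i]
  -- the vector field W
  set W : Fin d → EuclideanSpace ℝ (Fin d) → ℝ := fun i y =>
    f y * (p y * pderiv' f i y)
      + (π y * γ y i) * ((f y - 1) * Real.exp (f y) + 1) with hWdef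
  have hWs : ∀ i, ContDiff ℝ (⊤ : ℕ∞) (W i) := fun i =>
    (hf.mul (hpDfi i)).add ((hπγi i).mul
      (((hf.sub contDiff_const).mul hexp).add contDiff_const))
  have hWc : ∀ i, HasCompactSupport (W i) := by
    intro i
    apply HasCompactSupport.intro (hfc : IsCompact (tsupport f))
    intro x hx
    have hx0 : f x = 0 := image_eq_zero_of_notMem_tsupport hx
    simp [hWdef, hx0]
  -- expansion of the divergence of W
  have hG : ∀ (i : Fin d) x, pderiv' (fun y => (f y - 1) * Real.exp (f y) + 1) i x
      = f x * Real.exp (f x) * pderiv' f i x := by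
    intro i x
    rw [pderiv'_add_const (a := fun y => (f y - 1) * Real.exp (f y)),
      pderiv'_mul ((hD f hf x).sub_const 1) (hD _ hexp x),
      pderiv'_sub_const (a := f),
      pderiv'_exp (hD f hf x)]
    ring
  have hWexp : ∀ (i : Fin d) x, pderiv' (W i) i x
      = pderiv' f i x * (p x * pderiv' f i x)
        + f x * pderiv' (fun y => p y * pderiv' f i y) i x
        + pderiv' (fun y => π y * γ y i) i x * ((f x - 1) * Real.exp (f x) + 1)
        + (π x * γ x i) * (f x * Real.exp (f x) * pderiv' f i x) := by
    intro i x
    rw [hWdef]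
    rw [pderiv'_add (a := fun y => f y * (p y * pderiv' f i y))
        (b := fun y => (π y * γ y i) * ((f y - 1) * Real.exp (f y) + 1))
        ((hD f hf x).mul (hD _ (hpDfi i) x))
        ((hD _ (hπγi i) x).mul (hD _ (((hf.sub contDiff_const).mul hexp).add contDiff_const) x)),
      pderiv'_mul (hD f hf x) (hD _ (hpDfi i) x),
      pderiv'_mul (hD _ (hπγi i) x)
        (hD _ (((hf.sub contDiff_const).mul hexp).add contDiff_const) x),
      hG i x]
    ring
  -- expansion of p γ_i derivative
  have hpγexp : ∀ (i : Fin d) x, pderiv' (fun y => p y * γ y i) i x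
      = pderiv' (fun y => π y * γ y i) i x * Real.exp (f x)
        + (π x * γ x i) * (Real.exp (f x) * pderiv' f i x) := by
    intro i x
    have he : (fun y => p y * γ y i) = fun y => (π y * γ y i) * Real.exp (f y) := by
      funext y; rw [hpdef]; ring
    rw [he, pderiv'_mul (hD _ (hπγi i) x) (hD _ hexp x), pderiv'_exp (hD f hf x)]
  -- key pointwise identity
  have key : ∀ x, ∑ i, pderiv' (W i) i x
      = f x * FPrhs π γ p x + Gamma1 f f x * p x := by
    intro x
    have hsum : ∑ i, (pderiv' (W i) i x
          - pderiv' f i x * pderiv' f i x * p x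
          - f x * pderiv' (fun y => p y * pderiv' f i y + p y * γ y i) i x)
        = ((f x - 1) * Real.exp (f x) + 1 - f x * Real.exp (f x))
            * ∑ i, pderiv' (fun y => π y * γ y i) i x := by
      rw [Finset.mul_sum]
      refine Finset.sum_congr rfl fun i _ => ?_
      rw [hWexp i x,
        pderiv'_add (a := fun y => p y * pderiv' f i y) (b := fun y => p y * γ y i)
          (hD _ (hpDfi i) x) (hD _ (hpγi i) x),
        hpγexp i x]
      ring
    rw [hstat x, mul_zero] at hsum
    rw [Finset.sum_sub_distrib, Finset.sum_sub_distrib] at hsum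
    have h1 : Gamma1 f f x * p x = ∑ i, pderiv' f i x * pderiv' f i x * p x := by
      rw [Gamma1, Finset.sum_mul]
    have h2 : f x * FPrhs π γ p x
        = ∑ i, f x * pderiv' (fun y => p y * pderiv' f i y + p y * γ y i) i x := by
      rw [hFP x, Finset.mul_sum]
    rw [h1, h2]
    linarith
  -- integrability
  have hWint : ∀ i : Fin d, Integrable (fun x => pderiv' (W i) i x) := fun i =>
    (contDiff_pderiv' (hWs i) i).continuous.integrable_of_hasCompactSupport
      (hasCompactSupport_pderiv' (hWc i) i)
  have hFPcont : Continuous (fun x => FPrhs π γ p x) := by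
    have : (fun x => FPrhs π γ p x)
        = fun x => -(∑ i, pderiv' (fun y => p y * (pderiv' (fun z => Real.log (π z)) i y
            - γ y i)) i x) + ∑ i, pderiv' (fun y => pderiv' p i y) i x := by
      funext x; simp only [FPrhs, lap, pderiv2]
    rw [this]
    exact ((continuous_finset_sum _ fun i _ =>
        (contDiff_pderiv' (hAi i) i).continuous).neg).add
      (continuous_finset_sum _ fun i _ => (contDiff_pderiv' (contDiff_pderiv' hps i) i).continuous)
  have hint1 : Integrable (fun x => f x * FPrhs π γ p x) := by
    apply Continuous.integrable_of_hasCompactSupport (hf.continuous.mul hFPcont)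
    apply HasCompactSupport.intro (hfc : IsCompact (tsupport f))
    intro x hx
    simp [image_eq_zero_of_notMem_tsupport hx]
  have hint2 : Integrable (fun x => Gamma1 f f x * p x) := by
    apply Continuous.integrable_of_hasCompactSupport
      ((continuous_finset_sum _ fun i _ => ((contDiff_pderiv' hf i).continuous.mul
        (contDiff_pderiv' hf i).continuous)).mul hps.continuous)
    apply HasCompactSupport.intro (hfc : IsCompact (tsupport f))
    intro x hx
    simp [Gamma1, pderiv'_zero_of_nmem hx]
  -- conclusion
  have hzero : ∫ x, (∑ i, pderiv' (W i) i x) = 0 := by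
    rw [integral_finset_sum _ fun i _ => hWint i]
    exact Finset.sum_eq_zero fun i _ => integral_pderiv'_eq_zero (hWs i) (hWc i) i
  have hsplit : ∫ x, (∑ i, pderiv' (W i) i x)
      = (∫ x, f x * FPrhs π γ p x) + ∫ x, Gamma1 f f x * p x := by
    rw [show (fun x => ∑ i, pderiv' (W i) i x)
        = fun x => f x * FPrhs π γ p x + Gamma1 f f x * p x from funext key]
    exact integral_add hint1 hint2
  have hfinal : (∫ x, f x * FPrhs π γ p x) = -∫ x, Gamma1 f f x * p x := by
    rw [hsplit] at hzero; linarith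
  exact hfinal


end
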